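/- Let P be a compact convex set in ℝ^d with 0 in its interior, and let Λ be an additive subgroup of ℝ^d such that the translates P + t, for t ∈ Λ, have pairwise disjoint interiors. Let F be a nonempty subset of ℝ^d, let V be the linear span of all differences x − y with x, y ∈ F, and let T = {t ∈ Λ : F + t ⊆ P}. Then for every pair of distinct elements s, t ∈ T there exists a nonzero continuous linear functional f : ℝ^d → ℝ vanishing on V such that f(s) < f(t) and f(s) ≤ f(u) ≤ f(t) for all u ∈ T. In particular, the image of T under the orthogonal projection π onto the orthogonal complement of V is an antipodal set. -/

import Mathlib

open Pointwise

/-- Every point of a convex set with `0` in its interior lies in the closure of the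
interior. -/
lemma subset_closure_interior_of_convex {d : ℕ} {P : Set (EuclideanSpace ℝ (Fin d))}
    (hPconvex : Convex ℝ P) (hP0 : (0 : EuclideanSpace ℝ (Fin d)) ∈ interior P) :
    P ⊆ closure (interior P) := by
  intro x hx
  have htend : Filter.Tendsto (fun n : ℕ => ((1 - 1 / (n + 1) : ℝ)) • x)
      Filter.atTop (nhds x) := by
    have h1 : Filter.Tendsto (fun n : ℕ => (1 - 1 / (n + 1) : ℝ)) Filter.atTop (nhds 1) := by
      have := tendsto_one_div_add_atTop_nhds_zero_nat (𝕜 := ℝ)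
      have := this.const_sub (1 : ℝ)
      simpa using this
    have := h1.smul_const x
    simpa using this
  refine mem_closure_of_tendsto htend ?_
  filter_upwards with n
  have ha : (0 : ℝ) ≤ 1 - 1 / (n + 1) := by
    have hle : (1 : ℝ) / (n + 1) ≤ 1 := by
      rw [div_le_one (by positivity)]
      linarith [Nat.cast_nonneg (α := ℝ) n]
    linarith
  have hb : (0 : ℝ) < 1 / (n + 1) := by positivity
  have hab : (1 - 1 / (n + 1) : ℝ) + 1 / (n + 1) = 1 := by ring
  have := hPconvex.combo_closure_interior_mem_interior (subset_closure hx) hP0 ha hb hab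
  simpa using this

/-- Lemma antipod: for distinct `s, t` in `T = {t ∈ Λ : F + t ⊆ P}` there is a
nonzero continuous linear functional vanishing on the direction space `V` of `F`
which separates `s` from `t` and bounds all of `T` between them. -/
theorem antipodal_functional_of_packing (d : ℕ)
    (P : Set (EuclideanSpace ℝ (Fin d))) (hPcompact : IsCompact P) (hPconvex : Convex ℝ P)
    (hP0 : (0 : EuclideanSpace ℝ (Fin d)) ∈ interior P)
    (Λ : AddSubgroup (EuclideanSpace ℝ (Fin d)))
    (hpack : ∀ s ∈ Λ, ∀ t ∈ Λ, s ≠ t →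
      Disjoint (interior (s +ᵥ P)) (interior (t +ᵥ P)))
    (F : Set (EuclideanSpace ℝ (Fin d))) (hF : F.Nonempty)
    (s t : EuclideanSpace ℝ (Fin d))
    (hs : s ∈ {u : EuclideanSpace ℝ (Fin d) | u ∈ Λ ∧ u +ᵥ F ⊆ P})
    (ht : t ∈ {u : EuclideanSpace ℝ (Fin d) | u ∈ Λ ∧ u +ᵥ F ⊆ P})
    (hst : s ≠ t) :
    ∃ f : EuclideanSpace ℝ (Fin d) →L[ℝ] ℝ, f ≠ 0 ∧
      (∀ v ∈ Submodule.span ℝ {x : EuclideanSpace ℝ (Fin d) | ∃ a ∈ F, ∃ b ∈ F, x = a - b},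
        f v = 0) ∧
      f s < f t ∧
      ∀ u ∈ {u : EuclideanSpace ℝ (Fin d) | u ∈ Λ ∧ u +ᵥ F ⊆ P}, f s ≤ f u ∧ f u ≤ f t := by
  obtain ⟨hsΛ, hsF⟩ := hs
  obtain ⟨htΛ, htF⟩ := ht
  obtain ⟨a, haF⟩ := hF
  have hts : t - s ∈ Λ := sub_mem htΛ hsΛ
  have hne : (0 : EuclideanSpace ℝ (Fin d)) ≠ t - s := by
    intro h
    exact hst (by rw [eq_comm, sub_eq_zero] at h; exact h.symm)
  have hdisj := hpack 0 (zero_mem Λ) (t - s) hts hne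
  rw [zero_vadd] at hdisj
  -- interiors
  rw [interior_vadd] at hdisj
  -- separate the two open convex sets
  obtain ⟨f, c, hf₁, hf₂⟩ := geometric_hahn_banach_open_open
    hPconvex.interior isOpen_interior ((hPconvex.interior).vadd (t - s))
    (by rw [← interior_vadd]; exact isOpen_interior) hdisj
  have hsub : P ⊆ closure (interior P) := subset_closure_interior_of_convex hPconvex hP0
  -- upper bound on P
  have hPle : ∀ x ∈ P, f x ≤ c := by
    intro x hx
    have hcl : closure (interior P) ⊆ {y | f y ≤ c} :=
      closure_minimal (fun y hy => (hf₁ y hy).le)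
        (isClosed_le f.continuous continuous_const)
    exact hcl (hsub hx)
  -- lower bound on the translate
  have hQge : ∀ x ∈ P, c ≤ f (t - s + x) := by
    intro x hx
    have hcl : closure (interior P) ⊆ {y | c ≤ f (t - s + y)} := by
      refine closure_minimal (fun y hy => ?_)
        (isClosed_le continuous_const (f.continuous.comp (continuous_const.add continuous_id)))
      have hmem : (t - s) + y ∈ (t - s) +ᵥ interior P := by
        simpa [vadd_eq_add] using Set.vadd_mem_vadd_set (a := t - s) hy
      exact (hf₂ _ hmem).le
    exact hcl (hsub hx)
  -- key: on F + t the functional is constantly c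
  have hkey : ∀ x ∈ F, f t + f x = c := by
    intro x hxF
    have h1 : t + x ∈ P := htF (Set.vadd_mem_vadd_set hxF)
    have h2 : s + x ∈ P := hsF (Set.vadd_mem_vadd_set hxF)
    have hle : f (t + x) ≤ c := hPle _ h1
    have hge : c ≤ f (t - s + (s + x)) := hQge _ h2
    have heq : t - s + (s + x) = t + x := by abel
    rw [heq] at hge
    have : f (t + x) = c := le_antisymm hle hge
    simpa [map_add] using this
  have hc0 : 0 < c := by
    have := hf₁ 0 hP0
    simpa using this
  have hts' : c ≤ f (t - s) := by
    have := hQge 0 (interior_subset hP0)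
    simpa using this
  have hflt : f s < f t := by
    have : c ≤ f t - f s := by simpa [map_sub] using hts'
    linarith
  refine ⟨f, ?_, ?_, hflt, ?_⟩
  · intro hf0
    rw [hf0] at hflt
    simp at hflt
  · intro v hv
    have hle : Submodule.span ℝ {x : EuclideanSpace ℝ (Fin d) | ∃ a ∈ F, ∃ b ∈ F, x = a - b}
        ≤ LinearMap.ker (f : EuclideanSpace ℝ (Fin d) →ₗ[ℝ] ℝ) := by
      rw [Submodule.span_le]
      rintro x ⟨p, hp, q, hq, rfl⟩
      have h1 := hkey p hp
      have h2 := hkey q hq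
      have : f p = f q := by linarith
      simp [LinearMap.mem_ker, map_sub, this]
    exact hle hv
  · rintro u ⟨huΛ, huF⟩
    have h1 : u + a ∈ P := huF (Set.vadd_mem_vadd_set haF)
    have hle : f (u + a) ≤ c := hPle _ h1
    have hge : c ≤ f (t - s + (u + a)) := hQge _ h1
    have hk := hkey a haF
    constructor
    · have : c ≤ f t - f s + (f u + f a) := by
        simpa [map_add, map_sub] using hge
      linarith [hk]
    · have : f u + f a ≤ c := by simpa [map_add] using hle
      linarith [hk]
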